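/- The quadruple p = -a u⁵/2, q = 3a²u¹⁰/16, r = a³u¹⁵/64, v = -a u⁶/8 satisfies the system of equations q² + 2pr + 10au²v³ = 0, 2pq + 2r + 10au³v² = 0, p² + 2q + 5au⁴v = 0, 2p + au⁵ = 0, and it is the unique solution of this system with p, q, r, v ∈ ℚ(u). -/

import Mathlib

instance : CharZero (RatFunc ℚ) :=
  charZero_of_injective_algebraMap (algebraMap ℚ (RatFunc ℚ)).injective

lemma rat_sq_ne_three (q : ℚ) : q ^ 2 ≠ 3 := by
  intro h
  have h3 : Irrational (Real.sqrt 3) := by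
    simpa using (Nat.prime_three).irrational_sqrt
  have hq : Real.sqrt 3 = |(q : ℝ)| := by
    rw [show (3:ℝ) = (q:ℝ)^2 by exact_mod_cast h.symm, Real.sqrt_sq_eq_abs]
  rw [hq] at h3
  exact Rat.not_irrational |q| (by push_cast at h3 ⊢; exact h3)

lemma ratfunc_sq_ne_three (s : RatFunc ℚ) : s ^ 2 ≠ 3 := by
  intro h
  have hd : (algebraMap (Polynomial ℚ) (RatFunc ℚ)) s.denom ≠ 0 := by
    simpa using RatFunc.algebraMap_ne_zero s.denom_ne_zero
  rw [← RatFunc.num_div_denom s] at h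
  rw [div_pow, div_eq_iff (pow_ne_zero _ hd)] at h
  have h2 : s.num ^ 2 = Polynomial.C 3 * s.denom ^ 2 := by
    apply RatFunc.algebraMap_injective
    push_cast [map_mul, map_pow, map_ofNat]
    rw [h]
  have h3 := congrArg Polynomial.leadingCoeff h2
  rw [Polynomial.leadingCoeff_pow, Polynomial.leadingCoeff_mul,
    Polynomial.leadingCoeff_pow, Polynomial.leadingCoeff_C] at h3
  have hdl : s.denom.leadingCoeff ≠ 0 := Polynomial.leadingCoeff_ne_zero.mpr s.denom_ne_zero
  exact rat_sq_ne_three (s.num.leadingCoeff / s.denom.leadingCoeff) (by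
    field_simp [hdl]; linarith [h3])

/-- Over ℚ(u), the quadruple p = -au⁵/2, q = 3a²u¹⁰/16, r = a³u¹⁵/64, v = -au⁶/8
is the unique solution of the system q² + 2pr + 10au²v³ = 0, 2pq + 2r + 10au³v² = 0,
p² + 2q + 5au⁴v = 0, 2p + au⁵ = 0. -/
theorem stmt_17 (a : ℚ) (ha : a ≠ 0) :
    let u : RatFunc ℚ := RatFunc.X
    let a' : RatFunc ℚ := RatFunc.C a
    ∀ p q r v : RatFunc ℚ,
      (q ^ 2 + 2 * p * r + 10 * a' * u ^ 2 * v ^ 3 = 0 ∧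
       2 * p * q + 2 * r + 10 * a' * u ^ 3 * v ^ 2 = 0 ∧
       p ^ 2 + 2 * q + 5 * a' * u ^ 4 * v = 0 ∧
       2 * p + a' * u ^ 5 = 0) ↔
      (p = -a' * u ^ 5 / 2 ∧ q = 3 * a' ^ 2 * u ^ 10 / 16 ∧
       r = a' ^ 3 * u ^ 15 / 64 ∧ v = -a' * u ^ 6 / 8) := by
  intro u a' p q r v
  have ha' : a' ≠ 0 := by
    intro h
    apply ha
    have h0 : algebraMap (Polynomial ℚ) (RatFunc ℚ) (Polynomial.C a) = 0 := by
      rw [RatFunc.algebraMap_C]; exact h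
    simpa [Polynomial.C_eq_zero] using ((FaithfulSMul.algebraMap_eq_zero_iff _ _).mp h0)
  have hu : u ≠ 0 := RatFunc.X_ne_zero
  constructor
  · rintro ⟨h1, h2, h3, h4⟩
    have hp : p = -a' * u ^ 5 / 2 := by linear_combination h4 / 2
    subst hp
    have hq : q = (-(-a' * u ^ 5 / 2) ^ 2 - 5 * a' * u ^ 4 * v) / 2 := by
      linear_combination h3 / 2
    subst hq
    have hr : r = -((-a' * u ^ 5 / 2) * ((-(-a' * u ^ 5 / 2) ^ 2 - 5 * a' * u ^ 4 * v) / 2))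
        - 5 * a' * u ^ 3 * v ^ 2 := by
      linear_combination h2 / 2
    subst hr
    have hcube : 5 * a' * u ^ 2 *
        ((8 * v + a' * u ^ 6) * (16 * v ^ 2 + 16 * a' * u ^ 6 * v + a' ^ 2 * u ^ 12)) = 0 := by
      linear_combination 64 * h1
    have hmul : (8 * v + a' * u ^ 6) * (16 * v ^ 2 + 16 * a' * u ^ 6 * v + a' ^ 2 * u ^ 12) = 0 := by
      rcases mul_eq_zero.mp hcube with h | h
      · exfalso
        rcases mul_eq_zero.mp h with h' | h'
        · rcases mul_eq_zero.mp h' with h'' | h''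
          · norm_num at h''
          · exact ha' h''
        · exact hu (pow_eq_zero_iff (by norm_num) |>.mp h')
      · exact h
    rcases mul_eq_zero.mp hmul with hv | hv
    · have hv' : v = -a' * u ^ 6 / 8 := by linear_combination hv / 8
      subst hv'
      refine ⟨rfl, by ring, by ring, rfl⟩
    · exfalso
      apply ratfunc_sq_ne_three ((4 * v + 2 * a' * u ^ 6) / (a' * u ^ 6))
      rw [div_pow, div_eq_iff (pow_ne_zero _ (mul_ne_zero ha' (pow_ne_zero _ hu)))]
      linear_combination hv
  · rintro ⟨hp, hq, hr, hv⟩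
    subst hp; subst hq; subst hr; subst hv
    refine ⟨by ring, by ring, by ring, by ring⟩
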